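/- If Z is a symmetric invertible complex matrix with Re(Z) positive definite, then Y = Z⁻¹ is symmetric and Re(Y) is positive definite. -/
import Mathlib


open Matrix

theorem inverse_of_symmetric_re_pos_def {n : Type*} [Fintype n] [DecidableEq n]
    (Z : Matrix n n ℂ) (hsym : Zᵀ = Z) (hinv : IsUnit Z)
    (hPD : ∀ x : n → ℂ, x ≠ 0 → 0 < (star x ⬝ᵥ Z.mulVec x).re) :
    (Z⁻¹)ᵀ = Z⁻¹ ∧ ∀ x : n → ℂ, x ≠ 0 → 0 < (star x ⬝ᵥ (Z⁻¹).mulVec x).re := by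
  have hd : IsUnit Z.det := (Matrix.isUnit_iff_isUnit_det Z).mp hinv
  constructor
  · rw [Matrix.transpose_nonsing_inv, hsym]
  · intro x hx
    set y := Z⁻¹.mulVec x with hy
    have hZy : Z.mulVec y = x := by
      rw [hy, Matrix.mulVec_mulVec, Matrix.mul_nonsing_inv Z hd, Matrix.one_mulVec]
    have hy0 : y ≠ 0 := by
      intro h
      exact hx (by rw [← hZy, h, Matrix.mulVec_zero])
    have hsy : star y ≠ 0 := fun h => hy0 (by simpa using congrArg star h)
    have key := hPD (star y) hsy
    have hZ : ∀ i j, Z j i = Z i j := fun i j => by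
      conv_lhs => rw [← hsym]
      rfl
    have e1 : star x ⬝ᵥ y = star (star (star y) ⬝ᵥ Z.mulVec (star y)) := by
      rw [← hZy]
      simp only [dotProduct, Matrix.mulVec, dotProduct, Pi.star_apply, star_sum, star_mul',
        star_star, Finset.mul_sum, Finset.sum_mul]
      rw [Finset.sum_comm]
      refine Finset.sum_congr rfl fun i _ => Finset.sum_congr rfl fun j _ => ?_
      rw [hZ i j]
      ring
    rw [e1, Complex.star_def, Complex.conj_re]
    exact key
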